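/- Let c be a real number with 0 < c ≤ 1 satisfying 2c²·ln((1+c)/c) ≥ 1. Then for every real μ with 0 ≤ μ ≤ 1/(1+c), the definite integral ∫₀^μ [1 − (1 − cμ − x)(1 − cx/(1−x))] dx is at most cμ. -/

import Mathlib

/-- Lemma 2.5 (`l:integeral`), first part: if `0 < c ≤ 1` satisfies
`2c² ln((1+c)/c) ≥ 1`, then for every `0 ≤ μ ≤ 1/(1+c)`,
`∫₀^μ [1 − (1 − cμ − x)(1 − cx/(1−x))] dx ≤ cμ`. -/
theorem stmt_13 (c : ℝ) (hc0 : 0 < c) (hc1 : c ≤ 1)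
    (hc : 1 ≤ 2 * c ^ 2 * Real.log ((1 + c) / c))
    (μ : ℝ) (hμ0 : 0 ≤ μ) (hμ1 : μ ≤ 1 / (1 + c)) :
    (∫ x in (0 : ℝ)..μ, (1 - (1 - c * μ - x) * (1 - c * x / (1 - x)))) ≤ c * μ := by
  have h1c : (0:ℝ) < 1 + c := by linarith
  have hμlt : μ < 1 := lt_of_le_of_lt hμ1 (by rw [div_lt_one h1c]; linarith)
  have hpos : ∀ x ∈ Set.uIcc (0:ℝ) μ, (0:ℝ) < 1 - x := by
    intro x hx
    rw [Set.uIcc_of_le hμ0] at hx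
    have := hx.2
    linarith
  set F : ℝ → ℝ := fun x => (c*μ + c^2*μ)*x + (1+c)*x^2/2 + c^2*μ*Real.log (1-x)
    with hFdef
  have hderiv : ∀ x ∈ Set.uIcc (0:ℝ) μ,
      HasDerivAt F (1 - (1 - c*μ - x)*(1 - c*x/(1-x))) x := by
    intro x hx
    have hx1 : (1:ℝ) - x ≠ 0 := ne_of_gt (hpos x hx)
    have h1 : HasDerivAt (fun y : ℝ => (1:ℝ) - y) (-1) x := by
      simpa using (hasDerivAt_id x).const_sub 1
    have h2 : HasDerivAt (fun y : ℝ => Real.log (1 - y)) (-1 / (1 - x)) x :=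
      h1.log hx1
    have h3 : HasDerivAt F ((c*μ + c^2*μ)*1 + (1+c)*(2*x)/2 + c^2*μ*(-1/(1-x))) x := by
      apply HasDerivAt.add
      apply HasDerivAt.add
      · simpa using (hasDerivAt_id x).const_mul (c*μ + c^2*μ)
      · have : HasDerivAt (fun y : ℝ => y^2) (2*x) x := by
          simpa using hasDerivAt_pow 2 x
        simpa [mul_div_assoc] using (this.const_mul (1+c)).div_const 2
      · exact h2.const_mul (c^2*μ)
    convert h3 using 1
    field_simp
    ring
  have hcont : IntervalIntegrable
      (fun x => 1 - (1 - c * μ - x) * (1 - c * x / (1 - x)))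
      MeasureTheory.volume 0 μ := by
    apply ContinuousOn.intervalIntegrable
    apply ContinuousOn.sub continuousOn_const
    apply ContinuousOn.mul
    · fun_prop
    · apply ContinuousOn.sub continuousOn_const
      apply ContinuousOn.div
      · fun_prop
      · fun_prop
      · intro x hx; exact ne_of_gt (hpos x hx)
  have hint := intervalIntegral.integral_eq_sub_of_hasDerivAt hderiv hcont
  rw [hint]
  have hF0 : F 0 = 0 := by simp [hFdef]
  have hFμ : F μ = (c*μ + c^2*μ)*μ + (1+c)*μ^2/2 + c^2*μ*Real.log (1-μ) := rfl
  rw [hF0, hFμ, sub_zero]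
  -- Now the pure inequality
  have hM : (0:ℝ) < 1 - 1/(1+c) := by
    have : 1/(1+c) < 1 := by rw [div_lt_one h1c]; linarith
    linarith
  have h1μ : (0:ℝ) < 1 - μ := by linarith
  have hratio : (0:ℝ) < (1-μ)/(1-1/(1+c)) := div_pos h1μ hM
  have hlog1 : Real.log ((1-μ)/(1-1/(1+c))) ≤ (1-μ)/(1-1/(1+c)) - 1 :=
    Real.log_le_sub_one_of_pos hratio
  have hlogdiv : Real.log ((1-μ)/(1-1/(1+c)))
      = Real.log (1-μ) - Real.log (1-1/(1+c)) :=
    Real.log_div (ne_of_gt h1μ) (ne_of_gt hM)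
  have hMeq : (1:ℝ) - 1/(1+c) = c/(1+c) := by field_simp; ring
  have hloginv : Real.log (1 - 1/(1+c)) = - Real.log ((1+c)/c) := by
    rw [hMeq, ← Real.log_inv]
    congr 1
    field_simp
  have hsub : (1-μ)/(1-1/(1+c)) - 1 = (1/(1+c) - μ) * (1+c)/c := by
    rw [hMeq]
    field_simp
    ring
  have key : Real.log (1-μ) ≤ (1/(1+c) - μ) * (1+c)/c - Real.log ((1+c)/c) := by
    rw [hlogdiv, hloginv, hsub] at hlog1
    linarith
  -- Multiply by c²  (≥ 0) and combine
  have hc2 : (0:ℝ) ≤ c^2 := sq_nonneg c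
  have key2 : c^2 * Real.log (1-μ) ≤ c * (1 - (1+c)*μ) - c^2 * Real.log ((1+c)/c) := by
    have := mul_le_mul_of_nonneg_left key hc2
    have heq : c^2 * ((1/(1+c) - μ) * (1+c)/c) = c * (1 - (1+c)*μ) := by
      field_simp
    rw [mul_sub, heq] at this
    linarith
  have main : (c + c^2 + (1+c)/2) * μ + c^2 * Real.log (1-μ) ≤ c := by
    have hμc : (1+c) * μ ≤ 1 := (le_div_iff₀' h1c).mp hμ1
    nlinarith [key2, hc]
  calc (c*μ + c^2*μ)*μ + (1+c)*μ^2/2 + c^2*μ*Real.log (1-μ)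
      = μ * ((c + c^2 + (1+c)/2) * μ + c^2 * Real.log (1-μ)) := by ring
    _ ≤ μ * c := mul_le_mul_of_nonneg_left main hμ0
    _ = c * μ := mul_comm μ c
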